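/- arXiv:1503.08615 — 3 statements merged into one kernel-verified Lean document; each statement's English description precedes it below -/
import Mathlib

section
/- Let F : ℝ₊ → ℝ be continuous with F(0) = 0, let Θ_F(x) = arctan(F(x)) (valid since F has no singularities in this continuous case). Suppose G(κ) = G₀·(1 + O(κ⁻¹)) as κ → ∞ for a constant G₀ ∈ ℝ. Then for every sufficiently large n ∈ ℕ there exists a solution κₙ of tan(γκ) = G(κ) with κₙ = πn/γ + (1/γ)·arctan(G₀) + O(n⁻¹) as n → ∞, where γ > 0 is a fixed parameter. -/
open Real

lemma arctan_lip (x y : ℝ) : |Real.arctan x - Real.arctan y| ≤ |x - y| := by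
  have h : LipschitzWith 1 Real.arctan := by
    apply lipschitzWith_of_nnnorm_deriv_le Real.differentiable_arctan
    intro x
    rw [Real.deriv_arctan]
    have h1 : (0:ℝ) < 1 + x ^ 2 := by positivity
    have : |1 / (1 + x ^ 2)| ≤ 1 := by
      rw [abs_of_pos (by positivity), div_le_one h1]; nlinarith [sq_nonneg x]
    simpa [← NNReal.coe_le_coe, nnnorm, Real.norm_eq_abs, abs_inv] using this
  simpa [Real.dist_eq] using h.dist_le_mul x y


set_option maxHeartbeats 1000000 in
/-- Asymptotic solutions of the transcendental equation `tan(γκ) = G(κ)`: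
if `G` is continuous on `[K,∞)` with `|G(κ) − G₀| ≤ C/κ`, then for all large `n` there is
a solution `κₙ` of `tan(γκₙ) = G(κₙ)` with
`κₙ = πn/γ + arctan(G₀)/γ + O(n⁻¹)`. -/
theorem stmt_6 (γ : ℝ) (hγ : 0 < γ) (G₀ : ℝ) (C K : ℝ) (hC : 0 < C) (hK : 0 < K)
    (G : ℝ → ℝ) (hGcont : ContinuousOn G (Set.Ici K))
    (hG : ∀ κ ≥ K, |G κ - G₀| ≤ C / κ) :
    ∃ C' : ℝ, ∃ N : ℕ, ∀ n : ℕ, n ≥ N →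
      ∃ κ : ℝ, κ ≥ K ∧ Real.tan (γ * κ) = G κ ∧
        |κ - (π * n / γ + Real.arctan G₀ / γ)| ≤ C' / n := by
  have hπ : (0:ℝ) < π := Real.pi_pos
  set A := Real.arctan G₀ with hA
  have hAlt : |A| < π / 2 := by
    rw [abs_lt]
    exact ⟨Real.neg_pi_div_two_lt_arctan G₀, Real.arctan_lt_pi_div_two G₀⟩
  have hd : 0 < π / 2 - |A| := by linarith
  refine ⟨2 * C / π, ?_⟩
  obtain ⟨N, hNgt⟩ := exists_nat_gt (max (max (2 * γ * C / (π * (π / 2 - |A|)))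
      (γ * (K + π / (2 * γ) + 2 * C / π) / π)) (1 + 4 * γ * C / π ^ 2))
  refine ⟨N, fun n hn => ?_⟩
  have hnN : (N:ℝ) ≤ n := Nat.cast_le.mpr hn
  have hbig : max (max (2 * γ * C / (π * (π / 2 - |A|)))
      (γ * (K + π / (2 * γ) + 2 * C / π) / π)) (1 + 4 * γ * C / π ^ 2) < (n:ℝ) :=
    lt_of_lt_of_le hNgt hnN
  have h1 : 2 * γ * C / (π * (π / 2 - |A|)) < (n:ℝ) :=
    lt_of_le_of_lt (le_max_left _ _) (lt_of_le_of_lt (le_max_left _ _) hbig)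
  have h2 : γ * (K + π / (2 * γ) + 2 * C / π) / π < (n:ℝ) :=
    lt_of_le_of_lt (le_max_right _ _) (lt_of_le_of_lt (le_max_left _ _) hbig)
  have h3 : 1 + 4 * γ * C / π ^ 2 < (n:ℝ) :=
    lt_of_le_of_lt (le_max_right _ _) hbig
  have hn1 : (1:ℝ) ≤ (n:ℝ) := by
    have : 0 ≤ 4 * γ * C / π ^ 2 := by positivity
    linarith
  have hnpos : (0:ℝ) < n := by linarith
  set ε : ℝ := 2 * C / (π * n) with hε
  have hεpos : 0 < ε := by positivity
  have hεle : ε ≤ 2 * C / π := by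
    rw [hε]
    apply div_le_div_of_nonneg_left (by positivity) (by positivity)
    nlinarith
  have hγε : γ * ε < π / 2 - |A| := by
    have h1' : 2 * γ * C < (n:ℝ) * (π * (π / 2 - |A|)) := by
      rwa [div_lt_iff₀ (by positivity)] at h1
    have heq : γ * ε = 2 * γ * C / (π * n) := by rw [hε]; ring
    rw [heq, div_lt_iff₀ (by positivity)]
    nlinarith
  set μ : ℝ := π * n / γ + A / γ with hμ
  set a : ℝ := μ - ε with ha
  set b : ℝ := μ + ε with hb
  have hπn : K + π / (2 * γ) + 2 * C / π ≤ π * n / γ := by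
    rw [div_lt_iff₀ hπ] at h2
    rw [le_div_iff₀ hγ]
    nlinarith
  have hAbd : -(π / 2) ≤ A := by linarith [(abs_le.mp hAlt.le).1]
  have hAd : -(π / 2) / γ ≤ A / γ := (div_le_div_iff_of_pos_right hγ).mpr hAbd
  have heq2 : -(π / 2) / γ = -(π / (2 * γ)) := by ring
  have haK : K ≤ a := by
    rw [ha, hμ]
    have h2C : ε ≤ 2 * C / π := hεle
    linarith
  have hhalf : π * n / (2 * γ) ≤ a := by
    rw [ha, hμ]
    have key : π / (2*γ) + ε ≤ π * n / (2 * γ) := by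
      have eqn : π * (n:ℝ) / (2*γ) - π/(2*γ) = π * ((n:ℝ) - 1) / (2*γ) := by ring
      rw [← sub_nonneg]
      have hεb : ε ≤ 2 * C / π := hεle
      have h3' : 4 * γ * C < ((n:ℝ) - 1) * π ^ 2 := by
        have h3'' : 4 * γ * C / π ^ 2 < (n:ℝ) - 1 := by linarith
        rwa [div_lt_iff₀ (by positivity)] at h3''
      have bound : 2 * C / π ≤ π * ((n:ℝ) - 1) / (2 * γ) := by
        rw [div_le_div_iff₀ hπ (by positivity)]
        have e2 : π * ((n:ℝ) - 1) * π = ((n:ℝ) - 1) * π ^ 2 := by ring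
        linarith
      linarith
    have c1 : π * (n:ℝ) / γ = 2 * (π * n / (2 * γ)) := by ring
    linarith
  have hapos : 0 < a := lt_of_lt_of_le hK haK
  -- Lipschitz estimates at points in [a,b]
  have hest : ∀ κ, a ≤ κ → |Real.arctan (G κ) - A| ≤ γ * ε := by
    intro κ hκ
    have hκK : K ≤ κ := le_trans haK hκ
    have hκpos : 0 < κ := lt_of_lt_of_le hK hκK
    have l1 : |Real.arctan (G κ) - A| ≤ |G κ - G₀| := arctan_lip _ _
    have l2 : |G κ - G₀| ≤ C / κ := hG κ hκK
    have l3 : C / κ ≤ C / (π * n / (2 * γ)) := by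
      apply div_le_div_of_nonneg_left hC.le (by positivity)
      linarith [hhalf]
    have l4 : C / (π * n / (2 * γ)) = γ * ε := by
      rw [hε]; field_simp
    linarith
  -- IVT
  set h : ℝ → ℝ := fun κ => γ * κ - π * n - Real.arctan (G κ) with hh
  have hab : a ≤ b := by rw [ha, hb]; linarith
  have hcont : ContinuousOn h (Set.Icc a b) := by
    apply ContinuousOn.sub
    · exact (continuous_const.mul continuous_id').sub continuous_const |>.continuousOn
    · exact Real.continuous_arctan.comp_continuousOn
        ((hGcont.mono (Set.Ici_subset_Ici.mpr haK)).mono Set.Icc_subset_Ici_self)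
  have hha : h a ≤ 0 := by
    have hEa := (abs_le.mp (hest a le_rfl)).1
    have hga : γ * a = π * n + A - γ * ε := by rw [ha, hμ]; field_simp
    have hdef : h a = γ * a - π * n - Real.arctan (G a) := rfl
    rw [hdef, hga]
    linarith
  have hhb : 0 ≤ h b := by
    have hEb := (abs_le.mp (hest b (by linarith))).2
    have hgb : γ * b = π * n + A + γ * ε := by rw [hb, hμ]; field_simp
    have hdef : h b = γ * b - π * n - Real.arctan (G b) := rfl
    rw [hdef, hgb]
    linarith
  have hmem0 : (0:ℝ) ∈ Set.Icc (h a) (h b) := Set.mem_Icc.mpr ⟨hha, hhb⟩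
  obtain ⟨κ, hκmem, hκ0⟩ := intermediate_value_Icc hab hcont hmem0
  have hroot : γ * κ = π * n + Real.arctan (G κ) := by
    have : γ * κ - π * n - Real.arctan (G κ) = 0 := hκ0
    linarith
  refine ⟨κ, le_trans haK hκmem.1, ?_, ?_⟩
  · rw [hroot, add_comm, ← mul_comm (n:ℝ) π]
    rw [(Real.tan_periodic.nat_mul n) (Real.arctan (G κ))]
    exact Real.tan_arctan _
  · have hbd : |κ - μ| ≤ ε := by
      rw [abs_le]
      constructor
      · linarith [hκmem.1]
      · linarith [hκmem.2]
    have : 2 * C / π / n = ε := by rw [hε, div_div]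
    rw [hμ] at hbd
    rw [this]
    exact hbd
end

section
/- Let λₙ > 0 with λₙ → 0, and define μₙ = λₙ + Υ·λₙ^{3/2} + O(λₙ²) for a fixed complex constant Υ with Im Υ > 0. Then |Im μₙ| = Im Υ·|Re μₙ|^{3/2} + O((Re μₙ)²) as n → ∞. -/
open Real

private lemma stmt12_aux1 (C D s a Yre : ℝ) (hC0 : 0 ≤ C) (hD : D = |Yre| + C + 1)
    (hs0 : 0 < s) (hs1 : s ≤ 1) (hsD : D * s ≤ 1 / 2)
    (hre : |a - (s ^ 2 + Yre * s ^ 3)| ≤ C * s ^ 4) :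
    |a - s ^ 2| ≤ D * s ^ 3 ∧ s ^ 2 / 2 ≤ a ∧ a ≤ 3 * s ^ 2 / 2 ∧ 0 < a := by
  have hs3nn : (0:ℝ) ≤ s ^ 3 := by positivity
  have hs43 : s ^ 4 ≤ s ^ 3 := by nlinarith
  have hCs43 : C * s ^ 4 ≤ C * s ^ 3 := mul_le_mul_of_nonneg_left hs43 hC0
  have hY1 : -|Yre| * s ^ 3 ≤ Yre * s ^ 3 :=
    mul_le_mul_of_nonneg_right (neg_abs_le Yre) hs3nn
  have hY2 : Yre * s ^ 3 ≤ |Yre| * s ^ 3 :=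
    mul_le_mul_of_nonneg_right (le_abs_self Yre) hs3nn
  have hDs3 : D * s ^ 3 = |Yre| * s ^ 3 + C * s ^ 3 + s ^ 3 := by rw [hD]; ring
  have hre' := abs_le.1 hre
  have haD : |a - s ^ 2| ≤ D * s ^ 3 := by
    rw [abs_le]
    refine ⟨by nlinarith [hre'.1], by nlinarith [hre'.2]⟩
  have haD' := abs_le.1 haD
  have hDs3half : D * s ^ 3 ≤ s ^ 2 / 2 := by
    have := mul_le_mul_of_nonneg_right hsD (sq_nonneg s)
    nlinarith
  have ha_lb : s ^ 2 / 2 ≤ a := by linarith [haD'.1]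
  have ha_ub : a ≤ 3 * s ^ 2 / 2 := by linarith [haD'.2]
  have ha0 : 0 < a := by nlinarith
  exact ⟨haD, ha_lb, ha_ub, ha0⟩

private lemma stmt12_aux2 (D s t : ℝ) (hD0 : 0 < D) (hs0 : 0 < s)
    (ht0 : 0 ≤ t) (ht_ub : t ≤ 2 * s) (haD : |t ^ 2 - s ^ 2| ≤ D * s ^ 3) :
    |s ^ 3 - t ^ 3| ≤ 7 * D * s ^ 4 := by
  have hs3nn : (0:ℝ) ≤ s ^ 3 := by positivity
  have hst : 0 < s + t := by linarith
  rw [← mul_le_mul_iff_of_pos_right hst]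
  have heq : |s ^ 3 - t ^ 3| * (s + t) = |s ^ 2 - t ^ 2| * (s ^ 2 + s * t + t ^ 2) := by
    rw [show s + t = |s + t| from (abs_of_nonneg hst.le).symm,
      show s ^ 2 + s * t + t ^ 2 = |s ^ 2 + s * t + t ^ 2| from
        (abs_of_nonneg (by nlinarith [mul_nonneg hs0.le ht0, sq_nonneg s, sq_nonneg t])).symm,
      ← abs_mul, ← abs_mul]
    congr 1
    ring
  rw [heq]
  have h2 : |s ^ 2 - t ^ 2| ≤ D * s ^ 3 := by rw [abs_sub_comm]; exact haD
  have h3 : s ^ 2 + s * t + t ^ 2 ≤ 7 * s ^ 2 := by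
    nlinarith [mul_le_mul_of_nonneg_left ht_ub hs0.le, mul_self_le_mul_self ht0 ht_ub]
  calc |s ^ 2 - t ^ 2| * (s ^ 2 + s * t + t ^ 2) ≤ (D * s ^ 3) * (7 * s ^ 2) := by
        exact mul_le_mul h2 h3
          (by nlinarith [mul_nonneg hs0.le ht0, sq_nonneg s, sq_nonneg t])
          (mul_nonneg hD0.le hs3nn)
    _ ≤ 7 * D * s ^ 4 * (s + t) := by
        nlinarith [mul_nonneg (mul_nonneg hD0.le (pow_nonneg hs0.le 4)) ht0]

private lemma stmt12_aux3 (C D s t a b Yim : ℝ) (hC0 : 0 ≤ C) (hD0 : 0 < D)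
    (hYim : 0 < Yim) (hs0 : 0 < s) (ht0 : 0 ≤ t) (ht2 : t ^ 2 = a)
    (ha_lb : s ^ 2 / 2 ≤ a)
    (hcube : |s ^ 3 - t ^ 3| ≤ 7 * D * s ^ 4)
    (him : |b - Yim * s ^ 3| ≤ C * s ^ 4) :
    |(|b|) - Yim * t ^ 3| ≤ 4 * (C + 7 * Yim * D) * a ^ 2 := by
  have hc0 : 0 ≤ Yim * t ^ 3 := mul_nonneg hYim.le (pow_nonneg ht0 3)
  have ha0 : 0 < a := by nlinarith
  have hK : 0 ≤ C + 7 * Yim * D :=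
    add_nonneg hC0 (mul_nonneg (mul_nonneg (by norm_num) hYim.le) hD0.le)
  calc |(|b|) - Yim * t ^ 3|
      = |(|b|) - (|Yim * t ^ 3|)| := by rw [abs_of_nonneg hc0]
    _ ≤ |b - Yim * t ^ 3| := abs_abs_sub_abs_le_abs_sub _ _
    _ ≤ |b - Yim * s ^ 3| + |Yim * s ^ 3 - Yim * t ^ 3| := by
        calc |b - Yim * t ^ 3| = |(b - Yim * s ^ 3) + (Yim * s ^ 3 - Yim * t ^ 3)| := by
              congr 1; ring
          _ ≤ _ := abs_add_le _ _
    _ ≤ C * s ^ 4 + Yim * (7 * D * s ^ 4) := by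
        have he : |Yim * s ^ 3 - Yim * t ^ 3| = Yim * |s ^ 3 - t ^ 3| := by
          rw [← mul_sub, abs_mul, abs_of_pos hYim]
        rw [he]
        have := mul_le_mul_of_nonneg_left hcube hYim.le
        linarith [him]
    _ = (C + 7 * Yim * D) * s ^ 4 := by ring
    _ ≤ (C + 7 * Yim * D) * (4 * a ^ 2) := by
        refine mul_le_mul_of_nonneg_left ?_ hK
        nlinarith [mul_self_le_mul_self (sq_nonneg s) (show s ^ 2 ≤ 2 * a by linarith)]
    _ = 4 * (C + 7 * Yim * D) * a ^ 2 := by ring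

set_option maxHeartbeats 1000000 in
/-- If `λₙ > 0`, `λₙ → 0` and `μₙ = λₙ + Υλₙ^{3/2} + O(λₙ²)` with `Im Υ > 0`, then
`|Im μₙ| = Im Υ · |Re μₙ|^{3/2} + O((Re μₙ)²)`. -/
theorem stmt_12 (lam : ℕ → ℝ) (hpos : ∀ n, 0 < lam n)
    (hlim : Filter.Tendsto lam Filter.atTop (nhds 0))
    (Υ : ℂ) (hΥ : 0 < Υ.im) (μ : ℕ → ℂ)
    (h : ∃ C : ℝ, ∀ n, ‖μ n - ((lam n : ℂ) + Υ * (lam n : ℂ) ^ ((3 : ℂ) / 2))‖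
      ≤ C * lam n ^ 2) :
    ∃ C' : ℝ, ∃ N : ℕ, ∀ n : ℕ, n ≥ N →
      |(|(μ n).im|) - Υ.im * |(μ n).re| ^ ((3 : ℝ) / 2)| ≤ C' * (μ n).re ^ 2 := by
  obtain ⟨C, hC⟩ := h
  have hC0 : 0 ≤ C := by
    have h0 := hC 0
    have h1 := norm_nonneg (μ 0 - ((lam 0 : ℂ) + Υ * (lam 0 : ℂ) ^ ((3 : ℂ) / 2)))
    nlinarith [pow_pos (hpos 0) 2]
  set D : ℝ := |Υ.re| + C + 1 with hD
  have hD1 : 1 ≤ D := by have := abs_nonneg Υ.re; simp only [hD]; linarith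
  have hD0 : 0 < D := by linarith
  set ε : ℝ := min 1 ((1 / (2 * D)) ^ 2) with hε
  have hε0 : 0 < ε := by positivity
  obtain ⟨N, hN⟩ := (Filter.eventually_atTop).1 (hlim.eventually (eventually_lt_nhds hε0))
  refine ⟨4 * (C + 7 * Υ.im * D), N, fun n hn => ?_⟩
  set r : ℝ := lam n with hrdef
  have hr0 : 0 < r := hpos n
  have hrε : r < ε := hN n hn
  have hr1 : r ≤ 1 := le_trans hrε.le (min_le_left _ _)
  set s : ℝ := Real.sqrt r with hsdef
  have hs0 : 0 < s := Real.sqrt_pos.2 hr0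
  have hs2 : s ^ 2 = r := Real.sq_sqrt hr0.le
  have hs1 : s ≤ 1 := by nlinarith
  have hsD : D * s ≤ 1 / 2 := by
    have hle : r ≤ (1 / (2 * D)) ^ 2 := le_trans hrε.le (min_le_right _ _)
    have hsle : s ≤ 1 / (2 * D) := by
      rw [hsdef]
      calc Real.sqrt r ≤ Real.sqrt ((1 / (2 * D)) ^ 2) := Real.sqrt_le_sqrt hle
        _ = 1 / (2 * D) := Real.sqrt_sq (by positivity)
    calc D * s ≤ D * (1 / (2 * D)) := mul_le_mul_of_nonneg_left hsle hD0.le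
      _ = 1 / 2 := by field_simp
  have hL : r ^ ((3:ℝ)/2) = s ^ 3 := by
    rw [hsdef, show Real.sqrt r = r ^ ((1:ℝ)/2) from Real.sqrt_eq_rpow r,
      ← Real.rpow_natCast (r ^ ((1:ℝ)/2)) 3, ← Real.rpow_mul hr0.le]
    norm_num
  obtain ⟨L, hLdef⟩ : ∃ L : ℝ, L = s ^ 3 := ⟨_, rfl⟩
  have hcpow : ((r : ℂ)) ^ ((3:ℂ)/2) = ((L : ℝ) : ℂ) := by
    rw [hLdef, ← hL, Complex.ofReal_cpow hr0.le]; norm_num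
  set a : ℝ := (μ n).re with hadef
  set b : ℝ := (μ n).im with hbdef
  have hzre : (μ n - ((r : ℂ) + Υ * (r : ℂ) ^ ((3:ℂ)/2))).re = a - (r + Υ.re * L) := by
    rw [hcpow]
    simp [hadef, Complex.sub_re, Complex.add_re, Complex.mul_re]
  have hzim : (μ n - ((r : ℂ) + Υ * (r : ℂ) ^ ((3:ℂ)/2))).im = b - Υ.im * L := by
    rw [hcpow]
    simp [hbdef, Complex.sub_im, Complex.add_im, Complex.mul_im]
  have hbound := hC n
  have hre : |a - (s ^ 2 + Υ.re * s ^ 3)| ≤ C * s ^ 4 := by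
    have h1 : |a - (r + Υ.re * L)| ≤ C * r ^ 2 := by
      rw [← hzre]; exact le_trans (Complex.abs_re_le_norm _) hbound
    rw [hLdef] at h1
    calc |a - (s ^ 2 + Υ.re * s ^ 3)| = |a - (r + Υ.re * s ^ 3)| := by rw [hs2]
      _ ≤ C * r ^ 2 := h1
      _ = C * s ^ 4 := by rw [← hs2]; ring
  have him : |b - Υ.im * s ^ 3| ≤ C * s ^ 4 := by
    have h1 : |b - Υ.im * L| ≤ C * r ^ 2 := by
      rw [← hzim]; exact le_trans (Complex.abs_im_le_norm _) hbound
    rw [hLdef] at h1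
    calc |b - Υ.im * s ^ 3| ≤ C * r ^ 2 := h1
      _ = C * s ^ 4 := by rw [← hs2]; ring
  obtain ⟨haD, ha_lb, ha_ub, ha0⟩ := stmt12_aux1 C D s a Υ.re hC0 hD hs0 hs1 hsD hre
  set t : ℝ := Real.sqrt a with htdef
  have ht0 : 0 ≤ t := Real.sqrt_nonneg a
  have ht2 : t ^ 2 = a := Real.sq_sqrt ha0.le
  have ht_ub : t ≤ 2 * s := by
    rw [htdef, show (2*s) = Real.sqrt ((2*s)^2) from (Real.sqrt_sq (by positivity)).symm]
    exact Real.sqrt_le_sqrt (by nlinarith)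
  have habs : |a| = a := abs_of_pos ha0
  have haL : |a| ^ ((3:ℝ)/2) = t ^ 3 := by
    rw [habs, htdef, show Real.sqrt a = a ^ ((1:ℝ)/2) from Real.sqrt_eq_rpow a,
      ← Real.rpow_natCast (a ^ ((1:ℝ)/2)) 3, ← Real.rpow_mul ha0.le]
    norm_num
  have hcube : |s ^ 3 - t ^ 3| ≤ 7 * D * s ^ 4 :=
    stmt12_aux2 D s t hD0 hs0 ht0 ht_ub (by rw [ht2]; exact haD)
  rw [haL]
  exact stmt12_aux3 C D s t a b Υ.im hC0 hD0 hΥ hs0 ht0 ht2 ha_lb hcube him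
end

section
/- Define w₀(z) = 2·arcsinh(√z/2) and β(z) = (1/2)·(w₀(z) + sinh(w₀(z))) for z > 0. Then β(z)² = z + z²/12 + O(z³) as z → 0⁺. -/
open Real

lemma inv_sqrt_bounds (x : ℝ) (hx0 : 0 ≤ x) (hx1 : x ≤ 1) :
    1 - x ^ 2 / 2 ≤ (Real.sqrt (1 + x ^ 2))⁻¹ ∧
      (Real.sqrt (1 + x ^ 2))⁻¹ ≤ 1 - x ^ 2 / 2 + 3 / 8 * x ^ 4 := by
  have h1 : (0:ℝ) ≤ 1 + x ^ 2 := by positivity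
  set s := Real.sqrt (1 + x ^ 2) with hs
  have hs2 : s ^ 2 = 1 + x ^ 2 := Real.sq_sqrt h1
  have hs1 : 1 ≤ s := by
    nlinarith [Real.sqrt_nonneg (1 + x ^ 2)]
  have hspos : 0 < s := by linarith
  constructor
  · rw [inv_eq_one_div, le_div_iff₀ hspos]
    nlinarith [sq_nonneg (x ^ 2 * s), sq_nonneg (s - 1)]
  · rw [inv_eq_one_div, div_le_iff₀ hspos]
    nlinarith [sq_nonneg (x ^ 3), pow_nonneg hx0 6, pow_nonneg hx0 4,
      pow_le_pow_of_le_one hx0 hx1 (le_refl 6), sq_nonneg (s - 1),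
      sq_nonneg ((1 - x ^ 2 / 2 + 3 / 8 * x ^ 4) * s - 1),
      mul_pos hspos hspos]

lemma hasDerivAt_g (x : ℝ) :
    HasDerivAt (fun t => Real.arsinh t - (t - t ^ 3 / 6))
      ((Real.sqrt (1 + x ^ 2))⁻¹ - (1 - x ^ 2 / 2)) x := by
  have h1 := (Real.hasStrictDerivAt_arsinh x).hasDerivAt
  have h2 : HasDerivAt (fun t : ℝ => t - t ^ 3 / 6) (1 - x ^ 2 / 2) x := by
    have : HasDerivAt (fun t : ℝ => t - t ^ 3 / 6) _ x := (hasDerivAt_id x).sub ((hasDerivAt_pow 3 x).div_const 6)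
    convert this using 1
    norm_num
    ring
  exact h1.sub h2

lemma arsinh_bounds (t : ℝ) (ht0 : 0 ≤ t) (ht1 : t ≤ 1) :
    t - t ^ 3 / 6 ≤ Real.arsinh t ∧
      Real.arsinh t ≤ t - t ^ 3 / 6 + 3 / 8 * t ^ 5 := by
  have hmem0 : (0:ℝ) ∈ Set.Icc (0:ℝ) 1 := by constructor <;> norm_num
  have hmemt : t ∈ Set.Icc (0:ℝ) 1 := ⟨ht0, ht1⟩
  have hint : ∀ x ∈ interior (Set.Icc (0:ℝ) 1), 0 ≤ x ∧ x ≤ 1 := by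
    intro x hx
    rw [interior_Icc] at hx
    exact ⟨hx.1.le, hx.2.le⟩
  have h5 : ∀ x : ℝ, HasDerivAt (fun t : ℝ => 3 / 8 * t ^ 5) (3 / 8 * (5 * x ^ 4)) x := by
    intro x
    have := (hasDerivAt_pow 5 x).const_mul (3/8 : ℝ)
    simpa using this
  constructor
  · have hmono : MonotoneOn (fun t => Real.arsinh t - (t - t ^ 3 / 6)) (Set.Icc 0 1) := by
      apply monotoneOn_of_hasDerivWithinAt_nonneg (convex_Icc 0 1)
        (f' := fun x => (Real.sqrt (1 + x ^ 2))⁻¹ - (1 - x ^ 2 / 2))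
      · exact fun x _ => ((hasDerivAt_g x).continuousAt).continuousWithinAt
      · exact fun x _ => (hasDerivAt_g x).hasDerivWithinAt
      · intro x hx
        obtain ⟨h0, h1⟩ := hint x hx
        have := (inv_sqrt_bounds x h0 h1).1
        linarith
    have := hmono hmem0 hmemt ht0
    simpa using this
  · have hmono : MonotoneOn
        (fun t => 3 / 8 * t ^ 5 - (Real.arsinh t - (t - t ^ 3 / 6))) (Set.Icc 0 1) := by
      apply monotoneOn_of_hasDerivWithinAt_nonneg (convex_Icc 0 1)
        (f' := fun x => 3 / 8 * (5 * x ^ 4) - ((Real.sqrt (1 + x ^ 2))⁻¹ - (1 - x ^ 2 / 2)))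
      · exact fun x _ => ((h5 x).sub (hasDerivAt_g x)).continuousAt.continuousWithinAt
      · exact fun x _ => ((h5 x).sub (hasDerivAt_g x)).hasDerivWithinAt
      · intro x hx
        obtain ⟨h0, h1⟩ := hint x hx
        have h2 := (inv_sqrt_bounds x h0 h1).2
        nlinarith [pow_nonneg h0 4]
    have := hmono hmem0 hmemt ht0
    simp only [Real.arsinh_zero] at this
    nlinarith [this]

/-- With `w₀(z) = 2·arcsinh(√z/2)` and `β(z) = (w₀(z) + sinh(w₀(z)))/2`, one has
`β(z)² = z + z²/12 + O(z³)` as `z → 0⁺`. -/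
theorem stmt_16 (w₀ β : ℝ → ℝ)
    (hw : ∀ z, w₀ z = 2 * Real.arsinh (Real.sqrt z / 2))
    (hβ : ∀ z, β z = (1 / 2) * (w₀ z + Real.sinh (w₀ z))) :
    ∃ C δ : ℝ, 0 < δ ∧ ∀ z : ℝ, 0 < z → z < δ →
      |β z ^ 2 - (z + z ^ 2 / 12)| ≤ C * z ^ 3 := by
  refine ⟨1, 1, one_pos, fun z hz0 hz1 => ?_⟩
  set t := Real.sqrt z / 2 with htdef
  have ht0 : 0 ≤ t := by positivity
  have ht2 : t ^ 2 = z / 4 := by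
    rw [htdef, div_pow, Real.sq_sqrt hz0.le]
    ring
  have ht1 : t ≤ 1 := by nlinarith
  have hthalf : t ≤ 1 / 2 := by nlinarith
  have hs1 : (0:ℝ) ≤ 1 + t ^ 2 := by positivity
  set s := Real.sqrt (1 + t ^ 2) with hsdef
  have hs2 : s ^ 2 = 1 + t ^ 2 := Real.sq_sqrt hs1
  have hssgn : 1 ≤ s := by nlinarith [Real.sqrt_nonneg (1 + t ^ 2)]
  have hsinh : Real.sinh (w₀ z) = 2 * t * s := by
    rw [hw, ← htdef, Real.sinh_two_mul, Real.sinh_arsinh, Real.cosh_arsinh]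
  have hβz : β z = Real.arsinh t + t * s := by
    rw [hβ, hsinh, hw, ← htdef]; ring
  have hsub : s ≤ 1 + t ^ 2 / 2 := by nlinarith
  have hslb : 1 + t ^ 2 / 2 - t ^ 4 / 8 ≤ s := by nlinarith
  obtain ⟨ha1, ha2⟩ := arsinh_bounds t ht0 ht1
  have hb1 : 2 * t + t ^ 3 / 3 - t ^ 5 / 2 ≤ β z := by
    rw [hβz]; nlinarith
  have hb2 : β z ≤ 2 * t + t ^ 3 / 3 + 3 / 8 * t ^ 5 := by
    rw [hβz]; nlinarith
  have hz4 : z = 4 * t ^ 2 := by linarith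
  have hzz2 : z ^ 2 = 16 * t ^ 4 := by rw [hz4]; ring
  have hzz3 : z ^ 3 = 64 * t ^ 6 := by rw [hz4]; ring
  have h5le : t ^ 5 ≤ t ^ 1 := pow_le_pow_of_le_one ht0 ht1 (by norm_num)
  have hLpos : (0:ℝ) ≤ 2 * t + t ^ 3 / 3 - t ^ 5 / 2 := by
    simp only [pow_one] at h5le
    nlinarith [pow_nonneg ht0 3]
  have hbpos : 0 ≤ β z := le_trans hLpos hb1
  have hUpos : (0:ℝ) ≤ 2 * t + t ^ 3 / 3 + 3 / 8 * t ^ 5 := by positivity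
  have hU2 : β z ^ 2 ≤ (2 * t + t ^ 3 / 3 + 3 / 8 * t ^ 5) ^ 2 :=
    pow_le_pow_left₀ hbpos hb2 2
  have hL2 : (2 * t + t ^ 3 / 3 - t ^ 5 / 2) ^ 2 ≤ β z ^ 2 :=
    pow_le_pow_left₀ hLpos hb1 2
  have h8 : t ^ 8 ≤ t ^ 6 := pow_le_pow_of_le_one ht0 ht1 (by norm_num)
  have h10 : t ^ 10 ≤ t ^ 6 := pow_le_pow_of_le_one ht0 ht1 (by norm_num)
  have hUexp : (2 * t + t ^ 3 / 3 + 3 / 8 * t ^ 5) ^ 2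
      = 4 * t ^ 2 + 4 / 3 * t ^ 4 + (3 / 2 + 1 / 9) * t ^ 6 + 1 / 4 * t ^ 8
        + 9 / 64 * t ^ 10 := by ring
  have hLexp : (2 * t + t ^ 3 / 3 - t ^ 5 / 2) ^ 2
      = 4 * t ^ 2 + 4 / 3 * t ^ 4 + (1 / 9 - 2) * t ^ 6 - 1 / 3 * t ^ 8
        + 1 / 4 * t ^ 10 := by ring
  set b := β z with hbdef
  rw [abs_le]
  rw [hUexp] at hU2
  rw [hLexp] at hL2
  constructor
  · rw [hzz3, hzz2, hz4]
    linarith [pow_nonneg ht0 10, pow_nonneg ht0 6]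
  · rw [hzz3, hzz2, hz4]
    linarith [pow_nonneg ht0 6, pow_nonneg ht0 8]
end
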